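/- Let f : ℝⁿ → ℝ be differentiable with L-Lipschitz gradient, γ ∈ (0,1), J ∈ ℝ^{m×n}, H positive semidefinite, and β ≥ L / (2 λ_min (1−γ)) where λ_min is the smallest nonzero eigenvalue of JᵀJ. Suppose the step d lies in the row space of J and satisfies ∇f(x)ᵀ d ≤ − dᵀ Jᵀ(H+βI)J d. Then the Armijo condition f(x+d) ≤ f(x) + γ ∇f(x)ᵀ d holds. -/

import Mathlib

open scoped Matrix RealInnerProductSpace


lemma descent_aux {n : ℕ} (f : EuclideanSpace ℝ (Fin n) → ℝ) (L : ℝ) (hL : 0 ≤ L)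
    (hdiff : ∀ x, HasGradientAt f (gradient f x) x)
    (hLip : ∀ x y, ‖gradient f x - gradient f y‖ ≤ L * ‖x - y‖)
    (x d : EuclideanSpace ℝ (Fin n)) :
    f (x + d) ≤ f x + ⟪gradient f x, d⟫ + L / 2 * ‖d‖ ^ 2 := by
  have hgradcont : Continuous (gradient f) := by
    have h : LipschitzWith L.toNNReal (gradient f) := by
      apply LipschitzWith.of_dist_le_mul
      intro a b
      simpa [dist_eq_norm, Real.coe_toNNReal L hL] using hLip a b
    exact h.continuous
  set φ : ℝ → ℝ := fun t => ⟪gradient f (x + t • d), d⟫ with hφ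
  have hccont : Continuous fun t : ℝ => x + t • d :=
    continuous_const.add (continuous_id.smul continuous_const)
  have hc : ∀ t : ℝ, HasDerivAt (fun s : ℝ => x + s • d) d t := by
    intro t
    simpa using ((hasDerivAt_id t).smul_const d).const_add x
  have hderiv : ∀ t : ℝ, HasDerivAt (fun s => f (x + s • d)) (φ t) t := by
    intro t
    have h1 := (hdiff (x + t • d)).hasFDerivAt.comp_hasDerivAt t (hc t)
    simpa only [Function.comp_def, hφ, InnerProductSpace.toDual_apply_apply] using h1
  have hφcont : Continuous φ := ((hgradcont.comp hccont).inner continuous_const)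
  have hint : ∫ t in (0:ℝ)..1, φ t = f (x + d) - f x := by
    have h := intervalIntegral.integral_eq_sub_of_hasDerivAt
      (f := fun s : ℝ => f (x + s • d)) (fun t _ => hderiv t)
      (hφcont.intervalIntegrable 0 1)
    simpa using h
  have hφ0 : φ 0 = ⟪gradient f x, d⟫ := by simp [hφ]
  have hbound : ∀ t ∈ Set.Icc (0:ℝ) 1, φ t ≤ φ 0 + L * ‖d‖ ^ 2 * t := by
    intro t ht
    have h1 : φ t - φ 0 = ⟪gradient f (x + t • d) - gradient f (x + (0:ℝ) • d), d⟫ := by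
      simp [hφ, inner_sub_left]
    have h2 : ⟪gradient f (x + t • d) - gradient f (x + (0:ℝ) • d), d⟫
        ≤ ‖gradient f (x + t • d) - gradient f (x + (0:ℝ) • d)‖ * ‖d‖ :=
      real_inner_le_norm _ _
    have h3 : ‖gradient f (x + t • d) - gradient f (x + (0:ℝ) • d)‖
        ≤ L * ‖(x + t • d) - (x + (0:ℝ) • d)‖ := hLip _ _
    have h4 : ‖(x + t • d) - (x + (0:ℝ) • d)‖ = t * ‖d‖ := by
      simp [norm_smul, abs_of_nonneg ht.1]
    rw [h4] at h3
    nlinarith [mul_le_mul_of_nonneg_right h3 (norm_nonneg d), norm_nonneg d]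
  have hg : IntervalIntegrable (fun u : ℝ => φ 0 + L * ‖d‖ ^ 2 * u)
      MeasureTheory.volume 0 1 := (Continuous.intervalIntegrable (continuous_const.add (continuous_const.mul continuous_id')) 0 1)
  have hmono := intervalIntegral.integral_mono_on (μ := MeasureTheory.volume)
    (g := fun u : ℝ => φ 0 + L * ‖d‖ ^ 2 * u) (by norm_num : (0:ℝ) ≤ 1)
    (hφcont.intervalIntegrable 0 1) hg hbound
  have hF : ∀ t : ℝ, HasDerivAt (fun u : ℝ => φ 0 * u + L * ‖d‖ ^ 2 * (u ^ 2 / 2))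
      (φ 0 + L * ‖d‖ ^ 2 * t) t := by
    intro t
    have h1 : HasDerivAt (fun u : ℝ => φ 0 * u) (φ 0) t := by
      simpa using (hasDerivAt_id t).const_mul (φ 0)
    have h2 : HasDerivAt (fun u : ℝ => u ^ 2 / 2) t t := by
      simpa using (hasDerivAt_pow 2 t).div_const 2
    exact h1.add (h2.const_mul (L * ‖d‖ ^ 2))
  have hval : ∫ t in (0:ℝ)..1, (φ 0 + L * ‖d‖ ^ 2 * t) = φ 0 + L / 2 * ‖d‖ ^ 2 := by
    have h := intervalIntegral.integral_eq_sub_of_hasDerivAt (fun t _ => hF t) hg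
    rw [h]
    norm_num
    ring
  rw [hval, hint, hφ0] at hmono
  linarith [hmono]

lemma quad_lb {n : ℕ} (A : Matrix (Fin n) (Fin n) ℝ) (hA : A.IsHermitian) (lam : ℝ)
    (hmin : ∀ μ : ℝ, Module.End.HasEigenvalue (Matrix.toLin' A) μ → μ ≠ 0 → lam ≤ μ)
    (d : EuclideanSpace ℝ (Fin n))
    (hker : ∀ v : Fin n → ℝ, A *ᵥ v = 0 → v ⬝ᵥ (fun i => d i) = 0) :
    lam * ‖d‖ ^ 2 ≤ (fun i => d i) ⬝ᵥ (A *ᵥ fun i => d i) := by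
  classical
  set b := hA.eigenvectorBasis with hb
  set μ := hA.eigenvalues with hμ
  set c : Fin n → ℝ := fun i => ⟪b i, d⟫ with hc
  have hAt : Aᵀ = A := by
    have := hA.eq
    simpa [Matrix.conjTranspose_eq_transpose_of_trivial] using this
  have hdot_inner : ∀ u v : EuclideanSpace ℝ (Fin n),
      (fun i => u i) ⬝ᵥ (fun i => v i) = ⟪u, v⟫ := by
    intro u v
    simp [dotProduct, PiLp.inner_apply, RCLike.inner_apply, mul_comm]
  set y : EuclideanSpace ℝ (Fin n) := WithLp.toLp 2 (A *ᵥ fun i => d i : Fin n → ℝ) with hy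
  -- ⟪b i, y⟫ = μ i * c i
  have key : ∀ i, ⟪b i, y⟫ = μ i * c i := by
    intro i
    rw [← hdot_inner (b i) y]
    have hyv : (fun i => y i) = (A *ᵥ fun i => d i : Fin n → ℝ) := rfl
    rw [hyv, Matrix.dotProduct_mulVec]
    have hv : (fun j => (b i) j) ᵥ* A = A *ᵥ (fun j => (b i) j) := by
      rw [← hAt, Matrix.vecMul_transpose, hAt]
    rw [hv]
    rw [show (A *ᵥ fun j => (b i) j) = A *ᵥ ⇑(b i) from rfl, hA.mulVec_eigenvectorBasis i]
    rw [smul_dotProduct]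
    rw [show ((⇑(b i) : Fin n → ℝ) ⬝ᵥ fun i => d i) = (fun j => (b i) j) ⬝ᵥ (fun i => d i) from rfl,
      hdot_inner (b i) d]
    simp [hc, hμ]
  have hcomm : ∀ i, (inner ℝ d (b i) : ℝ) = c i := fun i => real_inner_comm (b i) d
  have hexp : (fun i => d i) ⬝ᵥ (A *ᵥ fun i => d i) = ∑ i, c i * (μ i * c i) := by
    rw [show ((fun i => d i) ⬝ᵥ (A *ᵥ fun i => d i)) = (fun i => d i) ⬝ᵥ (fun i => y i) from rfl,
      hdot_inner d y, ← b.sum_inner_mul_inner d y]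
    refine Finset.sum_congr rfl fun i _ => ?_
    rw [key i, hcomm i]
  have hnorm : ‖d‖ ^ 2 = ∑ i, c i * c i := by
    rw [← real_inner_self_eq_norm_sq, ← b.sum_inner_mul_inner d d]
    refine Finset.sum_congr rfl fun i _ => ?_
    rw [hcomm i]
  rw [hexp, hnorm, Finset.mul_sum]
  refine Finset.sum_le_sum fun i _ => ?_
  rcases eq_or_ne (c i) 0 with h0 | h0
  · simp [h0]
  · have hμi : μ i ≠ 0 := by
      intro hz
      apply h0
      have hker' : A *ᵥ ⇑(b i) = 0 := by
        have hz' : hA.eigenvalues i = 0 := hz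
        rw [show (⇑(b i) : Fin n → ℝ) = ⇑(hA.eigenvectorBasis i) from rfl,
          hA.mulVec_eigenvectorBasis i, hz']
        simp
      have := hker (⇑(b i)) hker'
      rw [show ((⇑(b i) : Fin n → ℝ) ⬝ᵥ fun i => d i)
        = (fun j => (b i) j) ⬝ᵥ (fun i => d i) from rfl, hdot_inner (b i) d] at this
      exact this
    have heig : Module.End.HasEigenvalue (Matrix.toLin' A) (μ i) := by
      apply Module.End.hasEigenvalue_of_hasEigenvector (x := (⇑(b i) : Fin n → ℝ))
      constructor
      · rw [Module.End.mem_eigenspace_iff, Matrix.toLin'_apply]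
        exact hA.mulVec_eigenvectorBasis i
      · intro hz
        exact b.orthonormal.ne_zero i (by simpa using hz)
    have hlam := hmin (μ i) heig hμi
    nlinarith [mul_self_nonneg (c i)]

/-- Armijo line search condition (Lemma 3 of the paper): if `f` has `L`-Lipschitz
gradient, `γ ∈ (0,1)`, `β ≥ L/(2 λmin (1−γ))` where `λmin` is the smallest nonzero
eigenvalue of `JᵀJ`, the step `d` lies in the row space of `J` and satisfies the
descent condition `∇f(x)ᵀ d ≤ − dᵀ Jᵀ(H+βI)J d`, then
`f(x+d) ≤ f(x) + γ ∇f(x)ᵀ d`. -/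
theorem armijo_condition (m n : ℕ) (f : EuclideanSpace ℝ (Fin n) → ℝ) (L : ℝ)
    (hdiff : ∀ x, HasGradientAt f (gradient f x) x)
    (hLip : ∀ x y, ‖gradient f x - gradient f y‖ ≤ L * ‖x - y‖)
    (γ : ℝ) (hγ0 : 0 < γ) (hγ1 : γ < 1)
    (J : Matrix (Fin m) (Fin n) ℝ) (H : Matrix (Fin m) (Fin m) ℝ) (hH : H.PosSemidef)
    (lam : ℝ) (hlam_pos : 0 < lam)
    (hlam_eig : Module.End.HasEigenvalue (Matrix.toLin' (Jᵀ * J)) lam)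
    (hlam_min : ∀ μ : ℝ, Module.End.HasEigenvalue (Matrix.toLin' (Jᵀ * J)) μ →
      μ ≠ 0 → lam ≤ μ)
    (β : ℝ) (hβ : L / (2 * lam * (1 - γ)) ≤ β)
    (x d : EuclideanSpace ℝ (Fin n))
    (hd_row : ∃ w : Fin m → ℝ, (fun i => d i) = Jᵀ.mulVec w)
    (hdesc : ⟪gradient f x, d⟫ ≤
      - ((J.mulVec fun i => d i) ⬝ᵥ
          ((H + β • (1 : Matrix (Fin m) (Fin m) ℝ)).mulVec (J.mulVec fun i => d i)))) :
    f (x + d) ≤ f x + γ * ⟪gradient f x, d⟫ := by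
  rcases eq_or_ne d 0 with hd0 | hd0
  · simp [hd0]
  · have hdn : 0 < ‖d‖ := norm_pos_iff.2 hd0
    have hL0 : 0 ≤ L := by
      have h := hLip x (x + d)
      have h2 : ‖x - (x + d)‖ = ‖d‖ := by
        rw [show x - (x + d) = -d by abel, norm_neg]
      rw [h2] at h
      nlinarith [norm_nonneg (gradient f x - gradient f (x + d))]
    have hγ' : 0 < 1 - γ := by linarith
    have hβ0 : 0 ≤ β := le_trans (div_nonneg hL0 (by positivity)) hβ
    have hβ' : L / 2 ≤ β * lam * (1 - γ) := by
      rw [div_le_iff₀ (by positivity : (0:ℝ) < 2 * lam * (1 - γ))] at hβ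
      nlinarith
    have hA : (Jᵀ * J).IsHermitian := by
      have := Matrix.isHermitian_conjTranspose_mul_self J
      rwa [Matrix.conjTranspose_eq_transpose_of_trivial] at this
    obtain ⟨w, hw⟩ := hd_row
    have hker : ∀ v : Fin n → ℝ, (Jᵀ * J) *ᵥ v = 0 → v ⬝ᵥ (fun i => d i) = 0 := by
      intro v hv
      have hJv : J *ᵥ v = 0 := by
        have h1 : (J *ᵥ v) ⬝ᵥ (J *ᵥ v) = 0 := by
          have h2 : v ⬝ᵥ ((Jᵀ * J) *ᵥ v) = (J *ᵥ v) ⬝ᵥ (J *ᵥ v) := by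
            rw [← Matrix.mulVec_mulVec, Matrix.dotProduct_mulVec v Jᵀ,
              Matrix.vecMul_transpose]
          rw [hv] at h2
          simp at h2
          exact h2.symm
        exact dotProduct_self_eq_zero.1 h1
      rw [hw, Matrix.dotProduct_mulVec, Matrix.vecMul_transpose, hJv]
      simp
    have hquad := quad_lb (Jᵀ * J) hA lam hlam_min d hker
    set Jd := J *ᵥ (fun i => d i) with hJd
    have hq_eq : (fun i => d i) ⬝ᵥ ((Jᵀ * J) *ᵥ fun i => d i) = Jd ⬝ᵥ Jd := by
      rw [← Matrix.mulVec_mulVec, Matrix.dotProduct_mulVec, Matrix.vecMul_transpose]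
    rw [hq_eq] at hquad
    have hH0 : 0 ≤ Jd ⬝ᵥ (H *ᵥ Jd) := by simpa using hH.dotProduct_mulVec_nonneg Jd
    have hdesc' : ⟪gradient f x, d⟫ ≤ -(β * (Jd ⬝ᵥ Jd)) := by
      have hexpand : (H + β • (1 : Matrix (Fin m) (Fin m) ℝ)) *ᵥ Jd
          = H *ᵥ Jd + β • Jd := by
        rw [Matrix.add_mulVec, Matrix.smul_mulVec, Matrix.one_mulVec]
      have h3 : Jd ⬝ᵥ ((H + β • (1 : Matrix (Fin m) (Fin m) ℝ)) *ᵥ Jd)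
          = Jd ⬝ᵥ (H *ᵥ Jd) + β * (Jd ⬝ᵥ Jd) := by
        rw [hexpand, dotProduct_add, dotProduct_smul]
        simp [smul_eq_mul]
      have h4 := hdesc
      rw [h3] at h4
      linarith
    have hdescent := descent_aux f L hL0 hdiff hLip x d
    have hD : (0:ℝ) ≤ ‖d‖ ^ 2 := sq_nonneg _
    have h5 : β * (lam * ‖d‖ ^ 2) ≤ β * (Jd ⬝ᵥ Jd) :=
      mul_le_mul_of_nonneg_left hquad hβ0
    have h6 : (L / 2) * ‖d‖ ^ 2 ≤ (β * lam * (1 - γ)) * ‖d‖ ^ 2 :=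
      mul_le_mul_of_nonneg_right hβ' hD
    have h7 : 0 ≤ (1 - γ) * (-(β * (Jd ⬝ᵥ Jd)) - ⟪gradient f x, d⟫) :=
      mul_nonneg (le_of_lt hγ') (by linarith)
    nlinarith [h5, h6, h7, hdescent, hdesc']
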